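/- Let R = k[[x,y,z]] and F = a x² + b x y² + f x y − (z^q x − y^{m−2}) with a, b units, m ≥ 4, and f ∈ (z). Then in S = R/(F) the ideal (x, y^{m−2})S is principal (generated by the image of x), while for 0 < d < m−2 the ideal (x, y^d)S is not principal, i.e. requires two generators: dim_k (x,y^d)/((x,y,z)(x,y^d) + (F)) = 2. -/

import Mathlib

open MvPowerSeries

open Finsupp

variable {k : Type} [Field k]

/-- The set of power series whose coefficients vanish at all exponents `≤ e₀` is an ideal. -/
def vIdeal (k : Type) [Field k] (e₀ : Fin 3 →₀ ℕ) : Ideal (MvPowerSeries (Fin 3) k) where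
  carrier := {s | ∀ e ≤ e₀, coeff (R := k) e s = 0}
  zero_mem' := fun e _ => map_zero _
  add_mem' := fun hx hy e he => by rw [map_add, hx e he, hy e he, add_zero]
  smul_mem' := fun c x hx e he => by
    classical
    rw [smul_eq_mul, coeff_mul]
    refine Finset.sum_eq_zero fun p hp => ?_
    rw [Finset.HasAntidiagonal.mem_antidiagonal] at hp
    rw [hx p.2 (le_trans (hp ▸ le_add_self) he), mul_zero]

lemma mem_vIdeal {e₀ : Fin 3 →₀ ℕ} {s : MvPowerSeries (Fin 3) k} :
    s ∈ vIdeal k e₀ ↔ ∀ e ≤ e₀, coeff (R := k) e s = 0 := Iff.rfl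

lemma monomial_mem_vIdeal {e₀ e' : Fin 3 →₀ ℕ} (h : ¬ e' ≤ e₀) :
    (monomial (R := k) e' 1 : MvPowerSeries (Fin 3) k) ∈ vIdeal k e₀ := by
  intro e he
  exact coeff_monomial_ne (fun heq => h (by subst heq; exact he)) 1

lemma not_le_of_apply_lt {e e₀ : Fin 3 →₀ ℕ} (w : Fin 3) (h : e₀ w < e w) : ¬ e ≤ e₀ :=
  fun hle => absurd (Finsupp.le_def.mp hle w) (not_le.mpr h)

lemma coeff_fun_apply (g : (Fin 3 →₀ ℕ) → k) (e : Fin 3 →₀ ℕ) :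
    coeff (R := k) e (g : MvPowerSeries (Fin 3) k) = g e := rfl

/-- Power series with zero constant coefficient lie in the ideal generated by the variables. -/
lemma mem_span_X {f : MvPowerSeries (Fin 3) k} (h : constantCoeff (σ := Fin 3) (R := k) f = 0) :
    f ∈ Ideal.span {(X 0 : MvPowerSeries (Fin 3) k), X 1, X 2} := by
  classical
  set ψ0 : MvPowerSeries (Fin 3) k := fun e => if e 0 ≠ 0 then coeff (R := k) e f else 0 with hψ0
  set ψ1 : MvPowerSeries (Fin 3) k := fun e => if e 0 = 0 ∧ e 1 ≠ 0 then coeff (R := k) e f else 0 with hψ1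
  set ψ2 : MvPowerSeries (Fin 3) k :=
    fun e => if e 0 = 0 ∧ e 1 = 0 ∧ e 2 ≠ 0 then coeff (R := k) e f else 0 with hψ2
  have hsum : f = ψ0 + ψ1 + ψ2 := by
    ext e
    rw [map_add, map_add]
    by_cases h0 : e 0 = 0
    · by_cases h1 : e 1 = 0
      · by_cases h2 : e 2 = 0
        · have he : e = 0 := by ext i; fin_cases i <;> assumption
          subst he
          simp only [hψ0, hψ1, hψ2, coeff_fun_apply, coeff_apply]
          simp only [Finsupp.coe_zero, Pi.zero_apply, ne_eq, not_true_eq_false, if_false,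
            if_true, and_true, not_false_eq_true, ite_self, add_zero, zero_add]
          have := coeff_zero_eq_constantCoeff_apply f
          rw [coeff_apply] at this
          rw [this]; simp [h]
        · simp [hψ0, hψ1, hψ2, coeff_fun_apply, coeff_apply, h0, h1, h2]
      · simp [hψ0, hψ1, hψ2, coeff_fun_apply, coeff_apply, h0, h1]
    · simp [hψ0, hψ1, hψ2, coeff_fun_apply, coeff_apply, h0]
  have hd0 : (X 0 : MvPowerSeries (Fin 3) k) ∣ ψ0 := by
    rw [X_dvd_iff]
    intro e he
    simp [hψ0, coeff_fun_apply, coeff_apply, he]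
  have hd1 : (X 1 : MvPowerSeries (Fin 3) k) ∣ ψ1 := by
    rw [X_dvd_iff]
    intro e he
    simp [hψ1, coeff_fun_apply, coeff_apply, he]
  have hd2 : (X 2 : MvPowerSeries (Fin 3) k) ∣ ψ2 := by
    rw [X_dvd_iff]
    intro e he
    simp [hψ2, coeff_fun_apply, coeff_apply, he]
  have hmem : ∀ (i : Fin 3) (ψ : MvPowerSeries (Fin 3) k), X i ∣ ψ → i ∈ ({0, 1, 2} : Set (Fin 3)) →
      ψ ∈ Ideal.span {(X 0 : MvPowerSeries (Fin 3) k), X 1, X 2} := by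
    rintro i ψ ⟨c, rfl⟩ hi
    refine Ideal.mul_mem_right c _ (Ideal.subset_span ?_)
    rcases hi with rfl | rfl | rfl <;> simp
  rw [hsum]
  exact add_mem (add_mem (hmem 0 ψ0 hd0 (by simp)) (hmem 1 ψ1 hd1 (by simp)))
    (hmem 2 ψ2 hd2 (by simp))

set_option maxHeartbeats 1600000


set_option synthInstance.maxHeartbeats 1000000 in
/-- let `R = k[[x,y,z]]` and `F = a x² + b x y² + f x y - (z^q x - y^(m-2))`
with `a, b` units, `m ≥ 4`, `f ∈ (z)`.  Then in `S = R/(F)` the ideal `(x, y^(m-2))S` is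
principal, generated by the image of `x`, while for `0 < d < m - 2` the ideal `(x, y^d)S`
is not principal and `dim_k (x,y^d)/((x,y,z)(x,y^d) + (F)) = 2`. -/
theorem stmt18 (k : Type) [Field k] (m q : ℕ) (hm : 4 ≤ m) (hq : 0 < q)
    (a b f : MvPowerSeries (Fin 3) k) (ha : IsUnit a) (hb : IsUnit b)
    (hf : f ∈ Ideal.span {(X 2 : MvPowerSeries (Fin 3) k)})
    (F : MvPowerSeries (Fin 3) k)
    (hF : F = a * X 0 ^ 2 + b * X 0 * X 1 ^ 2 + f * X 0 * X 1 -
      (X 2 ^ q * X 0 - X 1 ^ (m - 2))) :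
    Ideal.map (Ideal.Quotient.mk (Ideal.span {F}))
        (Ideal.span {X 0, X 1 ^ (m - 2)}) =
      Ideal.span {Ideal.Quotient.mk (Ideal.span {F}) (X 0)} ∧
    ∀ d : ℕ, 0 < d → d < m - 2 →
      ¬ (Ideal.map (Ideal.Quotient.mk (Ideal.span {F}))
          (Ideal.span {X 0, X 1 ^ d})).IsPrincipal ∧
      Module.finrank k
        ((Ideal.span {(X 0 : MvPowerSeries (Fin 3) k), X 1 ^ d}) ⧸
          Submodule.comap (Ideal.span {(X 0 : MvPowerSeries (Fin 3) k), X 1 ^ d}).subtype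
            (Ideal.span {(X 0 : MvPowerSeries (Fin 3) k), X 1, X 2} *
                Ideal.span {(X 0 : MvPowerSeries (Fin 3) k), X 1 ^ d} +
              Ideal.span {F})) = 2 := by
  classical
  set G : MvPowerSeries (Fin 3) k := a * X 0 + b * X 1 ^ 2 + f * X 1 - X 2 ^ q with hG
  have hFG : F = X 0 * G + X 1 ^ (m - 2) := by rw [hF, hG]; ring
  have hGm : G ∈ Ideal.span {(X 0 : MvPowerSeries (Fin 3) k), X 1, X 2} := by
    apply mem_span_X
    simp [hG, map_sub, map_add, map_mul, map_pow, constantCoeff_X, zero_pow hq.ne']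
  constructor
  · -- Part 1
    rw [Ideal.map_span, Set.image_insert_eq, Set.image_singleton]
    refine le_antisymm (Ideal.span_le.mpr ?_) (Ideal.span_le.mpr ?_)
    · rintro t ht
      simp only [Set.mem_insert_iff, Set.mem_singleton_iff] at ht
      rcases ht with rfl | rfl
      · exact Ideal.subset_span rfl
      · rw [SetLike.mem_coe, Ideal.mem_span_singleton]
        refine ⟨-(Ideal.Quotient.mk (Ideal.span {F}) G), ?_⟩
        have h0 : Ideal.Quotient.mk (Ideal.span {F}) F = 0 :=
          Ideal.Quotient.eq_zero_iff_mem.mpr (Ideal.subset_span rfl)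
        have hrw : (X 1 : MvPowerSeries (Fin 3) k) ^ (m - 2) = F - X 0 * G := by
          rw [hFG]; ring
        rw [hrw, map_sub, map_mul, h0]
        ring
    · rintro t rfl
      exact Ideal.subset_span (by simp)
  · -- Part 2
    intro d hd0 hdm
    set e1 : Fin 3 →₀ ℕ := Finsupp.single 0 1 with he1
    set e2 : Fin 3 →₀ ℕ := Finsupp.single 1 d with he2
    set I : Ideal (MvPowerSeries (Fin 3) k) := Ideal.span {X 0, X 1 ^ d} with hI
    set mm : Ideal (MvPowerSeries (Fin 3) k) := Ideal.span {X 0, X 1, X 2} with hmm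
    have hX0I : (X 0 : MvPowerSeries (Fin 3) k) ∈ I := Ideal.subset_span (by simp)
    have hX1dI : (X 1 : MvPowerSeries (Fin 3) k) ^ d ∈ I := Ideal.subset_span (by simp)
    have hx0 : (X 0 : MvPowerSeries (Fin 3) k) = monomial (R := k) (Finsupp.single 0 1) 1 := X_def 0
    have hx1 : (X 1 : MvPowerSeries (Fin 3) k) = monomial (R := k) (Finsupp.single 1 1) 1 := X_def 1
    have hx2 : (X 2 : MvPowerSeries (Fin 3) k) = monomial (R := k) (Finsupp.single 2 1) 1 := X_def 2
    have hx1d : (X 1 : MvPowerSeries (Fin 3) k) ^ d = monomial (R := k) (Finsupp.single 1 d) 1 :=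
      X_pow_eq 1 d
    have hprod : mm * I ≤ vIdeal k e1 ⊓ vIdeal k e2 := by
      rw [hmm, hI, Ideal.span_mul_span', Ideal.span_le]
      rintro t ⟨u, hu, v, hv, rfl⟩
      simp only [Set.mem_insert_iff, Set.mem_singleton_iff] at hu hv
      rw [SetLike.mem_coe]
      rcases hu with rfl | rfl | rfl <;> rcases hv with rfl | rfl
      · beta_reduce
        rw [hx0, monomial_mul_monomial, one_mul]
        refine Submodule.mem_inf.mpr
          ⟨monomial_mem_vIdeal (not_le_of_apply_lt 0 ?_),
           monomial_mem_vIdeal (not_le_of_apply_lt 0 ?_)⟩ <;>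
          simp [he1, he2, Finsupp.add_apply, Finsupp.single_apply] <;> omega
      · beta_reduce
        rw [hx1d, hx0, monomial_mul_monomial, one_mul]
        refine Submodule.mem_inf.mpr
          ⟨monomial_mem_vIdeal (not_le_of_apply_lt 1 ?_),
           monomial_mem_vIdeal (not_le_of_apply_lt 0 ?_)⟩ <;>
          simp [he1, he2, Finsupp.add_apply, Finsupp.single_apply] <;> omega
      · beta_reduce
        rw [hx1, hx0, monomial_mul_monomial, one_mul]
        refine Submodule.mem_inf.mpr
          ⟨monomial_mem_vIdeal (not_le_of_apply_lt 1 ?_),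
           monomial_mem_vIdeal (not_le_of_apply_lt 0 ?_)⟩ <;>
          simp [he1, he2, Finsupp.add_apply, Finsupp.single_apply] <;> omega
      · beta_reduce
        rw [hx1d, hx1, monomial_mul_monomial, one_mul]
        refine Submodule.mem_inf.mpr
          ⟨monomial_mem_vIdeal (not_le_of_apply_lt 1 ?_),
           monomial_mem_vIdeal (not_le_of_apply_lt 1 ?_)⟩ <;>
          simp [he1, he2, Finsupp.add_apply, Finsupp.single_apply] <;> omega
      · beta_reduce
        rw [hx2, hx0, monomial_mul_monomial, one_mul]
        refine Submodule.mem_inf.mpr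
          ⟨monomial_mem_vIdeal (not_le_of_apply_lt 2 ?_),
           monomial_mem_vIdeal (not_le_of_apply_lt 0 ?_)⟩ <;>
          simp [he1, he2, Finsupp.add_apply, Finsupp.single_apply] <;> omega
      · beta_reduce
        rw [hx1d, hx2, monomial_mul_monomial, one_mul]
        refine Submodule.mem_inf.mpr
          ⟨monomial_mem_vIdeal (not_le_of_apply_lt 2 ?_),
           monomial_mem_vIdeal (not_le_of_apply_lt 2 ?_)⟩ <;>
          simp [he1, he2, Finsupp.add_apply, Finsupp.single_apply] <;> omega
    have hFmm : F ∈ mm * I := by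
      have hpow : (X 1 : MvPowerSeries (Fin 3) k) ^ (m - 2) = X 1 ^ (m - 2 - d) * X 1 ^ d := by
        rw [← pow_add]; congr 1; omega
      have hsplit : F = G * X 0 + X 1 ^ (m - 2 - d) * X 1 ^ d := by
        rw [hFG, hpow]; ring
      rw [hsplit]
      refine add_mem (Ideal.mul_mem_mul hGm hX0I) (Ideal.mul_mem_mul ?_ hX1dI)
      rw [hmm]
      apply mem_span_X
      rw [map_pow, constantCoeff_X, zero_pow (by omega : m - 2 - d ≠ 0)]
    have hFspan : Ideal.span {F} ≤ mm * I := by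
      rw [Ideal.span_le, Set.singleton_subset_iff]; exact hFmm
    have hsum : mm * I + Ideal.span {F} = mm * I := by
      rw [Submodule.add_eq_sup, sup_eq_left]; exact hFspan
    -- coefficient computations
    have cX0e1 : coeff (R := k) e1 (X 0 : MvPowerSeries (Fin 3) k) = 1 := by
      rw [he1, coeff_X, if_pos rfl]
    have hne1 : (Finsupp.single (1 : Fin 3) d : Fin 3 →₀ ℕ) ≠ Finsupp.single 0 1 := by
      intro h
      have := DFunLike.congr_fun h 0
      simp [Finsupp.single_apply] at this
    have cX0e2 : coeff (R := k) e2 (X 0 : MvPowerSeries (Fin 3) k) = 0 := by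
      rw [he2, coeff_X, if_neg hne1]
    have cX1e1 : coeff (R := k) e1 ((X 1 : MvPowerSeries (Fin 3) k) ^ d) = 0 := by
      rw [he1, coeff_X_pow, if_neg (fun h => hne1 h.symm)]
    have cX1e2 : coeff (R := k) e2 ((X 1 : MvPowerSeries (Fin 3) k) ^ d) = 1 := by
      rw [he2, coeff_X_pow, if_pos rfl]
    have hcoeffa : ∀ r : MvPowerSeries (Fin 3) k,
        coeff (R := k) e1 (r * X 0) = constantCoeff (σ := Fin 3) (R := k) r := by
      intro r
      rw [he1, hx0, coeff_mul_monomial, if_pos le_rfl, tsub_self, mul_one,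
        coeff_zero_eq_constantCoeff_apply]
    have hcoeffb : ∀ r : MvPowerSeries (Fin 3) k, coeff (R := k) e1 (r * X 1 ^ d) = 0 := by
      intro r
      rw [he1, hx1d, coeff_mul_monomial,
        if_neg (not_le_of_apply_lt 1 (by simp [Finsupp.single_apply] <;> omega))]
    have hcoeffc : ∀ r : MvPowerSeries (Fin 3) k, coeff (R := k) e2 (r * X 0) = 0 := by
      intro r
      rw [he2, hx0, coeff_mul_monomial,
        if_neg (not_le_of_apply_lt 0 (by simp [Finsupp.single_apply] <;> omega))]
    have hcoeffd : ∀ r : MvPowerSeries (Fin 3) k,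
        coeff (R := k) e2 (r * X 1 ^ d) = constantCoeff (σ := Fin 3) (R := k) r := by
      intro r
      rw [he2, hx1d, coeff_mul_monomial, if_pos le_rfl, tsub_self, mul_one,
        coeff_zero_eq_constantCoeff_apply]
    constructor
    · -- not principal
      rintro ⟨⟨g, hg⟩⟩
      have hgmem : g ∈ Ideal.map (Ideal.Quotient.mk (Ideal.span {F})) I := by
        rw [hg]; exact Submodule.mem_span_singleton_self g
      obtain ⟨i, hiI, hig⟩ := (Ideal.mem_map_iff_of_surjective _
        Ideal.Quotient.mk_surjective).mp hgmem
      have hx : Ideal.Quotient.mk (Ideal.span {F}) (X 0) ∈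
          Ideal.map (Ideal.Quotient.mk (Ideal.span {F})) I := Ideal.mem_map_of_mem _ hX0I
      rw [hg] at hx
      obtain ⟨c, hc⟩ := Ideal.mem_span_singleton'.mp hx
      obtain ⟨r, rfl⟩ := Ideal.Quotient.mk_surjective c
      have hy : Ideal.Quotient.mk (Ideal.span {F}) (X 1 ^ d) ∈
          Ideal.map (Ideal.Quotient.mk (Ideal.span {F})) I := Ideal.mem_map_of_mem _ hX1dI
      rw [hg] at hy
      obtain ⟨c', hc'⟩ := Ideal.mem_span_singleton'.mp hy
      obtain ⟨r', rfl⟩ := Ideal.Quotient.mk_surjective c'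
      have hmk0 : ∀ s : MvPowerSeries (Fin 3) k,
          Ideal.Quotient.mk (Ideal.span {F}) s = 0 → s ∈ mm * I :=
        fun s hs => hFspan (Ideal.Quotient.eq_zero_iff_mem.mp hs)
      have h1 : X 0 - r * i ∈ mm * I := by
        apply hmk0
        rw [map_sub, map_mul, hig, hc, sub_self]
      have h2 : X 1 ^ d - r' * i ∈ mm * I := by
        apply hmk0
        rw [map_sub, map_mul, hig, hc', sub_self]
      set cr := constantCoeff (σ := Fin 3) (R := k) r with hcr
      set cr' := constantCoeff (σ := Fin 3) (R := k) r' with hcr'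
      have hrm : r - C (σ := Fin 3) (R := k) cr ∈ mm := by
        rw [hmm]; exact mem_span_X (by simp [map_sub, constantCoeff_C, hcr])
      have hrm' : r' - C (σ := Fin 3) (R := k) cr' ∈ mm := by
        rw [hmm]; exact mem_span_X (by simp [map_sub, constantCoeff_C, hcr'])
      have h1' : X 0 - C (σ := Fin 3) (R := k) cr * i ∈ mm * I := by
        have hrw : (X 0 : MvPowerSeries (Fin 3) k) - C (σ := Fin 3) (R := k) cr * i =
            (X 0 - r * i) + (r - C (σ := Fin 3) (R := k) cr) * i := by ring
        rw [hrw]; exact add_mem h1 (Ideal.mul_mem_mul hrm hiI)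
      have h2' : X 1 ^ d - C (σ := Fin 3) (R := k) cr' * i ∈ mm * I := by
        have hrw : (X 1 : MvPowerSeries (Fin 3) k) ^ d - C (σ := Fin 3) (R := k) cr' * i =
            (X 1 ^ d - r' * i) + (r' - C (σ := Fin 3) (R := k) cr') * i := by ring
        rw [hrw]; exact add_mem h2 (Ideal.mul_mem_mul hrm' hiI)
      have hv1 := hprod h1'
      have hv2 := hprod h2'
      have q1 : (1 : k) - cr * coeff (R := k) e1 i = 0 := by
        have := hv1.1 e1 le_rfl
        rwa [map_sub, coeff_C_mul, cX0e1] at this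
      have q2 : (0 : k) - cr * coeff (R := k) e2 i = 0 := by
        have := hv1.2 e2 le_rfl
        rwa [map_sub, coeff_C_mul, cX0e2] at this
      have q3 : (0 : k) - cr' * coeff (R := k) e1 i = 0 := by
        have := hv2.1 e1 le_rfl
        rwa [map_sub, coeff_C_mul, cX1e1] at this
      have q4 : (1 : k) - cr' * coeff (R := k) e2 i = 0 := by
        have := hv2.2 e2 le_rfl
        rwa [map_sub, coeff_C_mul, cX1e2] at this
      have hA : coeff (R := k) e1 i ≠ 0 := by
        intro h
        rw [h, mul_zero, sub_zero] at q1
        exact one_ne_zero q1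
      have hcr'0 : cr' = 0 := by
        have : cr' * coeff (R := k) e1 i = 0 := by
          rw [zero_sub, neg_eq_zero] at q3; exact q3
        rcases mul_eq_zero.mp this with h | h
        · exact h
        · exact absurd h hA
      rw [hcr'0, zero_mul, sub_zero] at q4
      exact one_ne_zero q4
    · -- finrank
      rw [hsum]
      set N : Submodule (MvPowerSeries (Fin 3) k) I := Submodule.comap I.subtype (mm * I)
        with hN
      set φ : I →ₗ[k] k × k :=
        LinearMap.prod ((coeff (R := k) e1).comp (I.subtype.restrictScalars k))
          ((coeff (R := k) e2).comp (I.subtype.restrictScalars k)) with hφ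
      have φapp : ∀ s : I, φ s = (coeff (R := k) e1 (s : MvPowerSeries (Fin 3) k),
          coeff (R := k) e2 (s : MvPowerSeries (Fin 3) k)) := fun s => rfl
      have hker : N.restrictScalars k ≤ LinearMap.ker φ := by
        rintro ⟨s, hsI⟩ hs
        have hsmm : s ∈ mm * I := hs
        have h12 := hprod hsmm
        rw [LinearMap.mem_ker, φapp]
        exact Prod.ext (h12.1 e1 le_rfl) (h12.2 e2 le_rfl)
      have hkerle : LinearMap.ker φ ≤ N.restrictScalars k := by
        rintro ⟨s, hsI⟩ hs
        rw [LinearMap.mem_ker, φapp] at hs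
        have h1 : coeff (R := k) e1 s = 0 := congrArg Prod.fst hs
        have h2 : coeff (R := k) e2 s = 0 := congrArg Prod.snd hs
        obtain ⟨a', b', hab⟩ := Ideal.mem_span_pair.mp hsI
        have hcab := congrArg (coeff (R := k) e1) hab
        rw [map_add, hcoeffa, hcoeffb, add_zero, h1] at hcab
        have hcab2 := congrArg (coeff (R := k) e2) hab
        rw [map_add, hcoeffc, hcoeffd, zero_add, h2] at hcab2
        have ha' : a' ∈ mm := by rw [hmm]; exact mem_span_X hcab
        have hb' : b' ∈ mm := by rw [hmm]; exact mem_span_X hcab2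
        show s ∈ mm * I
        rw [← hab]
        exact add_mem (Ideal.mul_mem_mul ha' hX0I) (Ideal.mul_mem_mul hb' hX1dI)
      have hφx : φ ⟨X 0, hX0I⟩ = (1, 0) := by
        rw [φapp]
        exact Prod.ext cX0e1 cX0e2
      have hφy : φ ⟨X 1 ^ d, hX1dI⟩ = (0, 1) := by
        rw [φapp]
        exact Prod.ext cX1e1 cX1e2
      have hsurj : Function.Surjective φ := by
        rintro ⟨c1, c2⟩
        refine ⟨c1 • ⟨X 0, hX0I⟩ + c2 • ⟨X 1 ^ d, hX1dI⟩, ?_⟩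
        rw [map_add, map_smul, map_smul, hφx, hφy]
        simp [Prod.ext_iff]
      set ψ : (I ⧸ N.restrictScalars k) →ₗ[k] k × k :=
        (N.restrictScalars k).liftQ φ hker with hψ
      have hψsurj : Function.Surjective ψ := by
        intro p
        obtain ⟨x, hx⟩ := hsurj p
        exact ⟨Submodule.Quotient.mk x, by rw [hψ, Submodule.liftQ_apply, hx]⟩
      have hψinj : Function.Injective ψ := by
        rw [← LinearMap.ker_eq_bot]
        exact Submodule.ker_liftQ_eq_bot _ _ _ hkerle
      have eqv : (I ⧸ N.restrictScalars k) ≃ₗ[k] k × k :=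
        LinearEquiv.ofBijective ψ ⟨hψinj, hψsurj⟩
      calc Module.finrank k (I ⧸ N)
          = Module.finrank k (I ⧸ N.restrictScalars k) :=
            ((Submodule.Quotient.restrictScalarsEquiv k N).finrank_eq).symm
        _ = Module.finrank k (k × k) := eqv.finrank_eq
        _ = 2 := by
            rw [Module.finrank_prod, Module.finrank_self]
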